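/- Let $A \in [0,1]^{(n+1)\times(n+1)}$ be a matrix with row sums equal to 1, zero diagonal, first row entries $a_{0j} = 1/n$ for $j \ne 0$ (with $a_{00}=0$), and $a_{i0} \ge \delta$ for all $i \ge 1$ where $\delta > 0$. Let $\Lambda \in \{0,1\}^{(n+1)\times(n+1)}$ be a diagonal matrix with $\Lambda_{00} = 0$. Then the matrix $I - A^\top \Lambda$ is invertible and its inverse equals the Neumann series $\sum_{k=0}^\infty (A^\top \Lambda)^k$. -/

import Mathlib

open Matrix

/-- Leontief inverse.  For an admissible relative exposure matrix `A`
and a diagonal 0-1 distress matrix `Λ` with `Λ₀₀ = 0`, the matrix `I - Aᵀ Λ` is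
invertible and its inverse equals the Neumann series `∑ₖ (Aᵀ Λ)ᵏ`. -/
theorem stmt3 (n : ℕ) (hn : 0 < n) (δ : ℝ) (hδ : 0 < δ)
    (A Λ : Matrix (Fin (n+1)) (Fin (n+1)) ℝ)
    (hA01 : ∀ i j, A i j ∈ Set.Icc (0:ℝ) 1)
    (hArow : ∀ i, ∑ j, A i j = 1)
    (hAdiag : ∀ i, A i i = 0)
    (hA0 : ∀ j : Fin (n+1), j ≠ 0 → A 0 j = 1 / n)
    (hAδ : ∀ i : Fin (n+1), i ≠ 0 → δ ≤ A i 0)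
    (hΛdiag : ∀ i j, i ≠ j → Λ i j = 0)
    (hΛ01 : ∀ i, Λ i i = 0 ∨ Λ i i = 1)
    (hΛ00 : Λ 0 0 = 0) :
    IsUnit (1 - Aᵀ * Λ) ∧ (1 - Aᵀ * Λ)⁻¹ = ∑' k : ℕ, (Aᵀ * Λ) ^ k := by
  set M := Aᵀ * Λ with hMdef
  have hΛnn : ∀ j, 0 ≤ Λ j j := fun j => by rcases hΛ01 j with h | h <;> simp [h]
  have hΛle1 : ∀ j, Λ j j ≤ 1 := fun j => by rcases hΛ01 j with h | h <;> simp [h]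
  set δ' := min δ (1/2) with hδ'def
  have hδ'0 : 0 < δ' := lt_min hδ (by norm_num)
  have hδ'δ : δ' ≤ δ := min_le_left _ _
  have hδ'half : δ' ≤ 1/2 := min_le_right _ _
  set t := Real.sqrt (1 - δ') with htdef
  have hr0 : (0:ℝ) ≤ 1 - δ' := by linarith
  have ht0 : 0 < t := Real.sqrt_pos.mpr (by linarith)
  have ht2 : t ^ 2 = 1 - δ' := Real.sq_sqrt hr0
  have ht1 : t < 1 := by nlinarith
  -- entries of M
  have hM : ∀ i j, M i j = A j i * Λ j j := by
    intro i j
    rw [hMdef, Matrix.mul_apply]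
    rw [Finset.sum_eq_single j]
    · rfl
    · intro k _ hk; rw [hΛdiag k j hk, mul_zero]
    · simp
  have hMnn : ∀ i j, 0 ≤ M i j := fun i j => by
    rw [hM]; exact mul_nonneg (hA01 j i).1 (hΛnn j)
  have hcol : ∀ j, ∑ i, M i j = Λ j j := by
    intro j
    simp_rw [hM]
    rw [← Finset.sum_mul, hArow, one_mul]
  have hM0 : ∀ j, δ' * Λ j j ≤ M 0 j := by
    intro j
    by_cases hj : j = 0
    · subst hj; rw [hM, hΛ00, mul_zero, mul_zero]
    · rw [hM]
      exact mul_le_mul_of_nonneg_right (hδ'δ.trans (hAδ j hj)) (hΛnn j)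
  -- column sums of M² are at most 1 - δ'
  have hcol2 : ∀ l, ∑ i, (M * M) i l ≤ 1 - δ' := by
    intro l
    have e1 : ∑ i, (M * M) i l = ∑ m, (∑ i, M i m) * M m l := by
      simp_rw [Matrix.mul_apply]
      rw [Finset.sum_comm]
      simp_rw [Finset.sum_mul]
    rw [e1]
    simp_rw [hcol]
    have e2 : ∑ m, Λ m m * M m l = ∑ m ∈ Finset.univ.erase 0, Λ m m * M m l := by
      rw [Finset.sum_erase]
      rw [hΛ00, zero_mul]
    have e3 : ∑ m ∈ Finset.univ.erase 0, Λ m m * M m l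
        ≤ ∑ m ∈ Finset.univ.erase 0, M m l := by
      refine Finset.sum_le_sum fun m _ => ?_
      calc Λ m m * M m l ≤ 1 * M m l :=
            mul_le_mul_of_nonneg_right (hΛle1 m) (hMnn m l)
        _ = M m l := one_mul _
    have e4 : ∑ m ∈ Finset.univ.erase 0, M m l = (∑ m, M m l) - M 0 l :=
      Finset.sum_erase_eq_sub (Finset.mem_univ 0)
    have := hM0 l
    have := hΛle1 l
    have := hΛnn l
    rw [e2]
    calc ∑ m ∈ Finset.univ.erase 0, Λ m m * M m l ≤ (∑ m, M m l) - M 0 l := by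
          rw [← e4]; exact e3
      _ = Λ l l - M 0 l := by rw [hcol]
      _ ≤ 1 - δ' := by nlinarith
  -- nonnegativity of powers
  have hPnn : ∀ k i j, 0 ≤ (M ^ k) i j := by
    intro k
    induction k with
    | zero => intro i j; rw [pow_zero, Matrix.one_apply]; positivity
    | succ k ih =>
      intro i j
      rw [pow_succ, Matrix.mul_apply]
      exact Finset.sum_nonneg fun l _ => mul_nonneg (ih i l) (hMnn l j)
  -- key column sum bound
  have hcolk : ∀ k, ∀ j, (∑ i, (M ^ k) i j) * t ≤ t ^ k := by
    intro k
    induction k using Nat.twoStepInduction with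
    | zero =>
      intro j
      have : ∑ i, (M ^ 0) i j = 1 := by simp [Matrix.one_apply]
      rw [this, pow_zero, one_mul]
      exact ht1.le
    | one =>
      intro j
      rw [pow_one, pow_one, hcol j]
      exact mul_le_of_le_one_left ht0.le (hΛle1 j)
    | more k ih _ =>
      intro j
      have hsplit : M ^ (k + 2) = (M * M) * M ^ k := by
        rw [show k + 2 = 2 + k from Nat.add_comm k 2, pow_add, pow_two]
      have e1 : ∑ i, (M ^ (k + 2)) i j = ∑ l, (∑ i, (M * M) i l) * (M ^ k) l j := by
        simp_rw [hsplit, Matrix.mul_apply]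
        rw [Finset.sum_comm]
        simp_rw [Finset.sum_mul]
      have e2 : ∑ l, (∑ i, (M * M) i l) * (M ^ k) l j ≤ (1 - δ') * ∑ l, (M ^ k) l j := by
        rw [Finset.mul_sum]
        exact Finset.sum_le_sum fun l _ =>
          mul_le_mul_of_nonneg_right (hcol2 l) (hPnn k l j)
      calc (∑ i, (M ^ (k + 2)) i j) * t
          ≤ ((1 - δ') * ∑ l, (M ^ k) l j) * t := by
            refine mul_le_mul_of_nonneg_right ?_ ht0.le
            rw [e1]; exact e2
        _ = (1 - δ') * ((∑ l, (M ^ k) l j) * t) := by ring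
        _ ≤ (1 - δ') * t ^ k := mul_le_mul_of_nonneg_left (ih j) (by linarith)
        _ = t ^ (k + 2) := by rw [← ht2]; ring
  -- entrywise geometric bound
  have hentry : ∀ k i j, (M ^ k) i j ≤ t ^ k / t := by
    intro k i j
    have h1 : (M ^ k) i j ≤ ∑ i', (M ^ k) i' j :=
      Finset.single_le_sum (fun i' _ => hPnn k i' j) (Finset.mem_univ i)
    rw [le_div_iff₀ ht0]
    exact le_trans (mul_le_mul_of_nonneg_right h1 ht0.le) (hcolk k j)
  have hsumm : ∀ i j, Summable fun k => (M ^ k) i j := fun i j =>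
    Summable.of_nonneg_of_le (fun k => hPnn k i j) (fun k => hentry k i j)
      ((summable_geometric_of_lt_one ht0.le ht1).div_const t)
  set S : Matrix (Fin (n+1)) (Fin (n+1)) ℝ := fun i j => ∑' k, (M ^ k) i j with hSdef
  have hHS : HasSum (fun k => M ^ k) S := by
    refine Pi.hasSum.mpr ?_
    intro i
    refine Pi.hasSum.mpr ?_
    intro j
    exact (hsumm i j).hasSum
  have hMS : M * S = S - 1 := by
    ext i j
    rw [Matrix.mul_apply]
    have key : ∑ l, M i l * S l j = S i j - (1 : Matrix (Fin (n+1)) (Fin (n+1)) ℝ) i j := by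
      calc ∑ l, M i l * S l j
          = ∑ l, ∑' k, M i l * (M ^ k) l j := by
            exact Finset.sum_congr rfl fun l _ => (tsum_mul_left).symm
        _ = ∑' k, ∑ l, M i l * (M ^ k) l j :=
            (Summable.tsum_finsetSum fun l _ => (hsumm l j).mul_left (M i l)).symm
        _ = ∑' k, (M ^ (k + 1)) i j := by
            refine tsum_congr fun k => ?_
            rw [pow_succ', Matrix.mul_apply]
        _ = S i j - (1 : Matrix (Fin (n+1)) (Fin (n+1)) ℝ) i j := by
            have h0 := Summable.tsum_eq_zero_add (hsumm i j)
            have h1 : (M ^ 0) i j = (1 : Matrix (Fin (n+1)) (Fin (n+1)) ℝ) i j := by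
              rw [pow_zero]
            have hSij : S i j = ∑' k, (M ^ k) i j := rfl
            rw [hSij]
            rw [h0, h1]
            ring
    rw [key, Matrix.sub_apply]
  have h1 : (1 - M) * S = 1 := by
    rw [sub_mul, one_mul, hMS, sub_sub_cancel]
  have hu : IsUnit (1 - M) := by
    rw [Matrix.isUnit_iff_isUnit_det]
    exact Matrix.isUnit_det_of_right_inverse h1
  have hinv : (1 - M)⁻¹ = S := Matrix.inv_eq_right_inv h1
  have htsum : ∑' k : ℕ, M ^ k = S := hHS.tsum_eq
  exact ⟨hu, by rw [htsum, hinv]⟩
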